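/- Let z be a word and a a letter such that za is a prefix of some Lyndon word, and let b be a letter with a < b. Then zb is a Lyndon word. -/
import Mathlib


variable {α : Type*} [LinearOrder α] [Inhabited α]

/-- A Lyndon word: a non-empty word strictly lexicographically smaller than
all its proper non-empty suffixes. -/
def IsLyndon (w : List α) : Prop :=
  w ≠ [] ∧ ∀ v : List α, v ≠ [] → v ≠ w → v <:+ w → List.Lex (· < ·) w v

/-- `wpow x k` is the word `x` repeated `k` times. -/
def wpow (x : List α) (k : ℕ) : List α := (List.replicate k x).flatten

/-- `infWord x` is the infinite word `x^∞` (junk value if `x = []`). -/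
def infWord (x : List α) : ℕ → α := fun i => x.getD (i % x.length) default

/-- Strict lexicographic order on infinite words. -/
def InfLt (f g : ℕ → α) : Prop := ∃ n, (∀ i < n, f i = g i) ∧ f n < g n

/-- The infinite ordering `≺` on non-empty words. -/
def Prec (u v : List α) : Prop :=
  InfLt (infWord u) (infWord v) ∨ (infWord u = infWord v ∧ v.length < u.length)

/-- `u` is strongly less than `v`: they share a common prefix followed by
strictly comparable letters. -/
def StrongLt (u v : List α) : Prop :=
  ∃ (p s t : List α) (a b : α), a < b ∧ u = p ++ a :: s ∧ v = p ++ b :: t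


lemma strongLt_of_lex : ∀ {u v : List α}, List.Lex (· < ·) u v →
    v.length ≤ u.length → StrongLt u v := by
  intro u v h
  induction h with
  | nil => intro hlen; simp at hlen
  | @cons c _ _ _ ih =>
    intro hlen
    obtain ⟨p, s, t, x, y, hxy, hu, hv⟩ := ih (by simpa using hlen)
    exact ⟨c :: p, s, t, x, y, hxy, by simp [hu], by simp [hv]⟩
  | rel h => exact fun _ => ⟨[], _, _, _, _, h, rfl, rfl⟩

lemma lex_append_left : ∀ (p : List α) {u v : List α},
    List.Lex (· < ·) u v → List.Lex (· < ·) (p ++ u) (p ++ v) := by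
  intro p
  induction p with
  | nil => exact fun h => h
  | cons c p ih => exact fun h => List.Lex.cons (ih h)

lemma lex_of_strongLt {u v : List α} (h : StrongLt u v) : List.Lex (· < ·) u v := by
  obtain ⟨p, s, t, x, y, hxy, rfl, rfl⟩ := h
  exact lex_append_left p (List.Lex.rel hxy)

lemma exists_mid {p q t u : List α} {c d : α}
    (h : p ++ c :: t = q ++ d :: u) (hlt : p.length < q.length) :
    ∃ m, q = p ++ c :: m := by
  have hp : p <+: q := by
    have h1 : p <+: q ++ d :: u := ⟨c :: t, h⟩
    have h2 : q <+: q ++ d :: u := ⟨d :: u, rfl⟩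
    exact (List.prefix_or_prefix_of_prefix h1 h2).resolve_right
      (fun hq => absurd (List.IsPrefix.length_le hq) (by omega))
  obtain ⟨k, rfl⟩ := hp
  rw [List.append_assoc] at h
  have h3 := List.append_cancel_left h
  cases k with
  | nil => simp at hlt
  | cons e k' =>
    simp only [List.cons_append, List.cons.injEq] at h3
    exact ⟨k', by rw [h3.1]⟩

/-- If `z ++ [a]` is a prefix of some Lyndon word and `a < b`, then
`z ++ [b]` is a Lyndon word. -/
theorem lyndon_of_prefix_succ_letter {α : Type*} [LinearOrder α] [Inhabited α]
    (z : List α) (a b : α) (hab : a < b)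
    (h : ∃ w : List α, IsLyndon w ∧ (z ++ [a]) <+: w) :
    IsLyndon (z ++ [b]) := by
  obtain ⟨w, ⟨hwne, hwlyn⟩, r, hwr⟩ := h
  have hw : w = z ++ a :: r := by rw [← hwr]; simp
  subst hw
  refine ⟨by simp, ?_⟩
  intro v hvne hvnq hvsuf
  obtain ⟨u, hu⟩ := hvsuf
  obtain ⟨s, c, rfl⟩ := v.eq_nil_or_concat.resolve_left hvne
  simp only [List.concat_eq_append] at hvne hvnq hu ⊢
  rw [← List.append_assoc] at hu
  obtain ⟨hus, hc⟩ := List.append_inj' hu (by simp)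
  have hcb : b = c := by simpa using hc.symm
  subst hcb
  subst hus
  have hune : u ≠ [] := by
    intro h0; subst h0; simp at hvnq
  have hupos : 0 < u.length := List.length_pos_iff.mpr hune
  -- the suffix s ++ a :: r of the Lyndon word
  have hlex : List.Lex (· < ·) ((u ++ s) ++ a :: r) (s ++ a :: r) := by
    refine hwlyn (s ++ a :: r) (by simp) ?_ ⟨u, by simp⟩
    intro heq
    have := congrArg List.length heq
    simp only [List.length_append, List.length_cons] at this
    omega
  have hst := strongLt_of_lex hlex (by simp only [List.length_append, List.length_cons]; omega)
  obtain ⟨p, s', t', x, y, hxy, hw1, hw2⟩ := hst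
  have hsz : s.length < (u ++ s).length := by simp; omega
  refine lex_of_strongLt ?_
  rcases lt_trichotomy p.length s.length with h1 | h1 | h1
  · obtain ⟨m, hm⟩ := exists_mid hw2.symm h1
    obtain ⟨m', hm'⟩ := exists_mid hw1.symm (by omega)
    exact ⟨p, m' ++ [b], m ++ [b], x, y, hxy, by rw [hm']; simp, by rw [hm]; simp⟩
  · obtain ⟨hps, hcons⟩ := List.append_inj hw2.symm h1
    injection hcons with hya _
    obtain ⟨m', hm'⟩ := exists_mid hw1.symm (by omega)
    refine ⟨p, m' ++ [b], [], x, b, ?_, by rw [hm']; simp, by rw [← hps]⟩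
    calc x < y := hxy
      _ = a := hya
      _ < b := hab
  · obtain ⟨m, hm⟩ := exists_mid hw2 h1
    have hw1' : (u ++ s) ++ a :: r = s ++ a :: (m ++ x :: s') := by rw [hw1, hm]; simp
    obtain ⟨m', hm'⟩ := exists_mid hw1'.symm hsz
    exact ⟨s, m' ++ [b], [], a, b, hab, by rw [hm']; simp, by simp⟩
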